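/- Let F be a family of (d+1)-element subsets of {1,...,n} with VC-dimension at most d. Then |F| ≤ |∂_d F|, where ∂_d F is the d-shadow of F. -/

import Mathlib

open Finset

private lemma neg_one_pow_powerset_sum {α : Type*} [DecidableEq α] (x : Finset α) :
    (∑ m ∈ x.powerset, (-1 : ℚ) ^ m.card) = if x = ∅ then 1 else 0 := by
  have h := Finset.sum_powerset_neg_one_pow_card (x := x)
  have : ((∑ m ∈ x.powerset, (-1 : ℤ) ^ m.card : ℤ) : ℚ)
      = ∑ m ∈ x.powerset, (-1 : ℚ) ^ m.card := by push_cast; rfl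
  rw [← this, h]
  split <;> norm_num

theorem stmt_3 (n d : ℕ) (𝒜 : Finset (Finset (Fin n)))
    (hunif : ∀ F ∈ 𝒜, F.card = d + 1)
    (hVC : ∀ S : Finset (Fin n), S.card = d + 1 → ∃ B ⊆ S, ∀ F ∈ 𝒜, F ∩ S ≠ B) :
    𝒜.card ≤ (((Finset.univ : Finset (Fin n)).powersetCard d).filter
      (fun T => ∃ F ∈ 𝒜, T ⊆ F)).card := by
  classical
  set 𝒮 := (((Finset.univ : Finset (Fin n)).powersetCard d).filter
      (fun T => ∃ F ∈ 𝒜, T ⊆ F)) with h𝒮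
  have hli : LinearIndependent ℚ
      (fun F : ↥𝒜 => fun T : ↥𝒮 =>
        (if (T : Finset (Fin n)) ⊆ (F : Finset (Fin n)) then (1:ℚ) else 0)) := by
    rw [Fintype.linearIndependent_iff]
    intro g hg
    set Λ : Finset (Fin n) → ℚ := fun G => if h : G ∈ 𝒜 then g ⟨G, h⟩ else 0 with hΛ
    set σ : Finset (Fin n) → ℚ := fun S => ∑ F ∈ 𝒜, if S ⊆ F then Λ F else 0 with hσ
    -- the shadow equations
    have H : ∀ T ∈ 𝒮, σ T = 0 := by
      intro T hT
      have h1 := congrFun hg ⟨T, hT⟩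
      simp only [Finset.sum_apply, Pi.zero_apply, smul_eq_mul] at h1
      rw [hσ]
      have h2 : ∀ i : ↥𝒜, g i * (if T ⊆ (i : Finset (Fin n)) then (1:ℚ) else 0)
          = (fun G => if T ⊆ G then Λ G else 0) (i : Finset (Fin n)) := by
        intro i
        simp only [hΛ, dif_pos i.2, mul_ite, mul_one, mul_zero]
      calc ∑ F ∈ 𝒜, (if T ⊆ F then Λ F else 0)
          = ∑ i : ↥𝒜, (fun G => if T ⊆ G then Λ G else 0) (i : Finset (Fin n)) :=
            (Finset.sum_coe_sort 𝒜 _).symm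
        _ = ∑ i : ↥𝒜, g i * (if T ⊆ (i : Finset (Fin n)) then (1:ℚ) else 0) := by
            simp_rw [h2]
        _ = 0 := h1
    -- star: σ S = 0 whenever |S| ≤ d
    have star : ∀ m : ℕ, ∀ S : Finset (Fin n), S.card + m = d → σ S = 0 := by
      intro m
      induction m with
      | zero =>
        intro S hScard
        by_cases hex : ∃ F ∈ 𝒜, S ⊆ F
        · refine H S ?_
          rw [h𝒮]
          exact mem_filter.2 ⟨mem_powersetCard.2 ⟨subset_univ S, by omega⟩, hex⟩
        · rw [hσ]
          refine Finset.sum_eq_zero fun F hF => ?_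
          rw [if_neg (fun hsub => hex ⟨F, hF, hsub⟩)]
      | succ m ih =>
        intro S hScard
        have key : ∑ x ∈ Sᶜ, σ (insert x S) = ((m:ℚ) + 2) * σ S := by
          rw [hσ]
          rw [Finset.sum_comm]
          rw [Finset.mul_sum]
          refine Finset.sum_congr rfl fun F hF => ?_
          by_cases hSF : S ⊆ F
          · have hcount : Sᶜ.filter (fun x => insert x S ⊆ F) = F \ S := by
              ext x
              simp only [mem_filter, mem_compl, mem_sdiff, Finset.insert_subset_iff]
              tauto
            have : ∀ x ∈ Sᶜ, (if insert x S ⊆ F then Λ F else 0)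
                = if insert x S ⊆ F then Λ F else 0 := fun _ _ => rfl
            rw [← Finset.sum_filter, hcount, Finset.sum_const, if_pos hSF]
            have hcard : (F \ S).card = m + 2 := by
              rw [card_sdiff_of_subset hSF, hunif F hF]; omega
            rw [hcard, nsmul_eq_mul]
            push_cast
            ring
          · rw [if_neg hSF, mul_zero]
            refine Finset.sum_eq_zero fun x hx => ?_
            rw [if_neg (fun hsub => hSF ((Finset.subset_insert x S).trans hsub))]
        have hz : ∑ x ∈ Sᶜ, σ (insert x S) = 0 := by
          refine Finset.sum_eq_zero fun x hx => ?_
          refine ih (insert x S) ?_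
          rw [Finset.card_insert_of_notMem (by simpa using hx)]
          omega
        rw [hz] at key
        have : ((m:ℚ) + 2) ≠ 0 := by positivity
        field_simp at key
        exact (mul_eq_zero.1 key.symm).resolve_left this
    -- every coefficient vanishes
    have hzero : ∀ G ∈ 𝒜, Λ G = 0 := by
      intro F₀ hF₀
      by_contra hne
      obtain ⟨B, hB, hmiss⟩ := hVC F₀ (hunif F₀ hF₀)
      -- the alternating sum E
      have hσF₀ : σ F₀ = Λ F₀ := by
        show (∑ F ∈ 𝒜, if F₀ ⊆ F then Λ F else 0) = Λ F₀
        rw [Finset.sum_eq_single F₀]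
        · rw [if_pos (Finset.Subset.refl F₀)]
        · intro F hF hFne
          rw [if_neg]
          intro hsub
          exact hFne (Finset.eq_of_subset_of_card_le hsub
            (by rw [hunif F hF, hunif F₀ hF₀])).symm
        · intro h; exact absurd hF₀ h
      have hE1 : ∑ S ∈ (F₀ \ B).powerset, (-1:ℚ) ^ S.card * σ (B ∪ S)
          = (-1:ℚ) ^ (F₀ \ B).card * Λ F₀ := by
        rw [Finset.sum_eq_single (F₀ \ B)]
        · rw [Finset.union_sdiff_of_subset hB, hσF₀]
        · intro S hS hSne
          have hSsub : S ⊆ F₀ \ B := Finset.mem_powerset.1 hS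
          have hBS : B ∪ S ⊆ F₀ :=
            Finset.union_subset hB (hSsub.trans (Finset.sdiff_subset))
          have hne' : B ∪ S ≠ F₀ := by
            intro hEq
            apply hSne
            apply Finset.Subset.antisymm hSsub
            intro x hx
            have hx1 : x ∈ B ∪ S := by rw [hEq]; exact (Finset.mem_sdiff.1 hx).1
            rcases Finset.mem_union.1 hx1 with h | h
            · exact absurd h (Finset.mem_sdiff.1 hx).2
            · exact h
          have hcard : (B ∪ S).card ≤ d := by
            have h1 : (B ∪ S).card < F₀.card :=
              Finset.card_lt_card (lt_of_le_of_ne hBS hne')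
            rw [hunif F₀ hF₀] at h1; omega
          rw [star (d - (B ∪ S).card) (B ∪ S) (by omega), mul_zero]
        · intro h
          exact absurd (Finset.mem_powerset.2 (Finset.Subset.refl _)) h
      have hE2 : ∑ S ∈ (F₀ \ B).powerset, (-1:ℚ) ^ S.card * σ (B ∪ S) = 0 := by
        rw [hσ]
        simp_rw [Finset.mul_sum]
        rw [Finset.sum_comm]
        refine Finset.sum_eq_zero fun G hG => ?_
        have inner : ∑ S ∈ (F₀ \ B).powerset, (-1:ℚ) ^ S.card * (if B ∪ S ⊆ G then Λ G else 0)
            = (if G ∩ F₀ = B then (1:ℚ) else 0) * Λ G := by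
          by_cases hBG : B ⊆ G
          · have hstep : ∀ S ∈ (F₀ \ B).powerset,
                (-1:ℚ) ^ S.card * (if B ∪ S ⊆ G then Λ G else 0)
                = (if S ⊆ G then (-1:ℚ) ^ S.card else 0) * Λ G := by
              intro S hS
              by_cases hSG : S ⊆ G
              · rw [if_pos hSG, if_pos (Finset.union_subset hBG hSG)]
              · rw [if_neg hSG, if_neg (fun h => hSG ((Finset.subset_union_right).trans h)),
                  mul_zero, zero_mul]
            rw [Finset.sum_congr rfl hstep, ← Finset.sum_mul]
            congr 1
            have hfilter : (F₀ \ B).powerset.filter (fun S => S ⊆ G)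
                = ((F₀ \ B) ∩ G).powerset := by
              ext S
              simp only [mem_filter, mem_powerset, Finset.subset_inter_iff]
            rw [← Finset.sum_filter, hfilter, neg_one_pow_powerset_sum]
            congr 1
            have : (F₀ \ B) ∩ G = ∅ ↔ G ∩ F₀ = B := by
              constructor
              · intro h
                apply Finset.Subset.antisymm
                · intro x hx
                  obtain ⟨hxG, hxF₀⟩ := Finset.mem_inter.1 hx
                  by_contra hxB
                  exact absurd (Finset.mem_inter.2 ⟨Finset.mem_sdiff.2 ⟨hxF₀, hxB⟩, hxG⟩)
                    (by rw [h]; exact Finset.notMem_empty x)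
                · exact Finset.subset_inter hBG hB
              · intro h
                ext x
                simp only [Finset.mem_inter, Finset.mem_sdiff, Finset.notMem_empty,
                  iff_false, not_and]
                intro ⟨hxF₀, hxB⟩ hxG
                exact hxB (by rw [← h]; exact Finset.mem_inter.2 ⟨hxG, hxF₀⟩)
            simp only [this]
          · have h1 : ∀ S ∈ (F₀ \ B).powerset,
                (-1:ℚ) ^ S.card * (if B ∪ S ⊆ G then Λ G else 0) = 0 := by
              intro S hS
              rw [if_neg (fun h => hBG ((Finset.subset_union_left).trans h)), mul_zero]
            rw [Finset.sum_eq_zero h1, if_neg, zero_mul]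
            intro h
            exact hBG (by rw [← h]; exact Finset.inter_subset_left)
        rw [inner, if_neg (hmiss G hG), zero_mul]
      rw [hE1] at hE2
      have : Λ F₀ = 0 := by
        have hpow : (-1:ℚ) ^ (F₀ \ B).card ≠ 0 := by
          apply pow_ne_zero; norm_num
        exact (mul_eq_zero.1 hE2).elim (fun h => absurd h hpow) id
      exact hne this
    intro i
    have h := hzero (i : Finset (Fin n)) i.2
    simp only [hΛ, dif_pos i.2, Subtype.coe_eta] at h
    exact h
  have h1 : 𝒜.card = Fintype.card ↥𝒜 := (Fintype.card_coe 𝒜).symm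
  have h2 : Fintype.card ↥𝒜 ≤ Module.finrank ℚ (↥𝒮 → ℚ) :=
    hli.fintype_card_le_finrank
  rw [Module.finrank_fintype_fun_eq_card] at h2
  rw [h1]
  exact h2.trans (Fintype.card_coe 𝒮).le
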